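/- Let G be a K₅-free graph on n vertices with e edges. Then τ_B(G) ≤ n²/4 − e/3. -/

import Mathlib

open SimpleGraph Finset

variable {V : Type*} [Fintype V] [DecidableEq V]

/-- `A` is a triangle-independent edge set of `G`: a set of edges of `G`
containing at most one edge from each triangle of `G`. -/
def IsTriangleIndep (G : SimpleGraph V) (A : Finset (Sym2 V)) : Prop :=
  (A : Set (Sym2 V)) ⊆ G.edgeSet ∧
    ∀ a b c : V, G.Adj a b → G.Adj b c → G.Adj a c →
      ({s(a, b), s(b, c), s(a, c)} ∩ A).card ≤ 1

/-- `α₁(G)`: the maximum size of a triangle-independent set in `G`. -/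
noncomputable def alphaOne (G : SimpleGraph V) : ℕ :=
  sSup {k | ∃ A : Finset (Sym2 V), IsTriangleIndep G A ∧ A.card = k}

/-- `τ_B(G)`: the minimum size of an edge set of `G` whose deletion makes `G` bipartite. -/
noncomputable def tauB (G : SimpleGraph V) : ℕ :=
  sInf {k | ∃ D : Finset (Sym2 V), (D : Set (Sym2 V)) ⊆ G.edgeSet ∧
    (G.deleteEdges (D : Set (Sym2 V))).Colorable 2 ∧ D.card = k}

/-- `b(G)`: the maximum size of a vertex set inducing a bipartite subgraph of `G`. -/
noncomputable def bipNum (G : SimpleGraph V) : ℕ :=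
  sSup {k | ∃ B : Finset V, (G.induce (B : Set V)).Colorable 2 ∧ B.card = k}

/-- ordered adjacent pairs with both endpoints in `A` -/
def paF (G : SimpleGraph V) [DecidableRel G.Adj] (A : Finset V) : Finset (V × V) :=
  Finset.univ.filter fun p => G.Adj p.1 p.2 ∧ p.1 ∈ A ∧ p.2 ∈ A

lemma mem_paF {G : SimpleGraph V} [DecidableRel G.Adj] {A : Finset V} {p : V × V} :
    p ∈ paF G A ↔ G.Adj p.1 p.2 ∧ p.1 ∈ A ∧ p.2 ∈ A := by
  simp [paF]

/-- symmetric swap count -/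
lemma card_pairs_swap (G : SimpleGraph V) [DecidableRel G.Adj] (M N : Finset V) :
    #(Finset.univ.filter fun p : V × V => G.Adj p.1 p.2 ∧ p.1 ∈ M ∧ p.2 ∈ N)
      = #(Finset.univ.filter fun p : V × V => G.Adj p.1 p.2 ∧ p.1 ∈ N ∧ p.2 ∈ M) := by
  apply Finset.card_bij (fun p _ => p.swap)
  · intro p hp
    simp only [mem_filter, mem_univ, true_and] at hp ⊢
    exact ⟨hp.1.symm, hp.2.2, hp.2.1⟩
  · intro p hp q hq h
    exact Prod.ext (congrArg Prod.snd h) (congrArg Prod.fst h)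
  · intro p hp
    refine ⟨p.swap, ?_, rfl⟩
    simp only [mem_filter, mem_univ, true_and] at hp ⊢
    exact ⟨hp.1.symm, hp.2.2, hp.2.1⟩

/-- degree-sum count -/
lemma card_pairs_left (G : SimpleGraph V) [DecidableRel G.Adj] (M A : Finset V) :
    #(Finset.univ.filter fun p : V × V => G.Adj p.1 p.2 ∧ p.1 ∈ M ∧ p.2 ∈ A)
      = ∑ u ∈ M, #(A.filter fun w => G.Adj u w) := by
  rw [Finset.card_eq_sum_card_fiberwise
    (f := Prod.fst) (t := M) (fun p hp => (Finset.mem_filter.1 hp).2.2.1)]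
  refine Finset.sum_congr rfl fun u hu => ?_
  apply Finset.card_bij (fun p _ => p.2)
  · intro p hp
    simp only [mem_filter, mem_univ, true_and] at hp ⊢
    obtain ⟨⟨ha, _, h2⟩, h1⟩ := hp
    subst h1
    exact ⟨h2, ha⟩
  · intro p hp q hq h
    simp only [mem_filter] at hp hq
    exact Prod.ext (hp.2.trans hq.2.symm) h
  · intro w hw
    simp only [mem_filter] at hw
    exact ⟨(u, w), by simp [hw.1, hw.2, hu, mem_filter], rfl⟩

lemma lemmaA (G : SimpleGraph V) [DecidableRel G.Adj] (r : ℕ) (hr : 1 ≤ r) :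
    ∀ A : Finset V, (∀ S : Finset V, S ⊆ A → ¬ G.IsNClique (r + 1) S) →
    ∃ f : V → ℕ, (∀ v, f v < r) ∧
      ((#((paF G A).filter fun p => f p.1 = f p.2) : ℝ)
        ≤ (1 - 1 / (r : ℝ)) * (#A : ℝ) ^ 2 - (#(paF G A) : ℝ)) := by
  induction r, hr using Nat.le_induction with
  | base =>
    intro A hcl
    refine ⟨fun _ => 0, fun v => Nat.one_pos, ?_⟩
    have hpa : paF G A = ∅ := by
      rw [Finset.eq_empty_iff_forall_notMem]
      rintro ⟨x, y⟩ hp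
      rw [mem_paF] at hp
      obtain ⟨hadj, hx, hy⟩ := hp
      refine hcl {x, y} ?_ ?_
      · intro z hz
        simp only [Finset.mem_insert, Finset.mem_singleton] at hz
        rcases hz with rfl | rfl <;> assumption
      · have h1 : G.IsNClique 1 {y} := isNClique_singleton.2 rfl
        have := h1.insert (a := x) (by intro b hb; simp only [Finset.mem_singleton] at hb; subst hb; exact hadj)
        simpa using this
    rw [hpa]
    simp
  | succ r hr ih =>
    intro A hcl
    rcases A.eq_empty_or_nonempty with rfl | hne
    · refine ⟨fun _ => 0, fun v => Nat.succ_pos r, ?_⟩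
      have hpa : paF G (∅ : Finset V) = ∅ := by
        rw [Finset.eq_empty_iff_forall_notMem]
        intro p hp
        exact absurd (mem_paF.1 hp).2.1 (Finset.notMem_empty _)
      rw [hpa]
      simp
    · obtain ⟨v, hvA, hmax⟩ := A.exists_max_image (fun u => #(A.filter fun w => G.Adj u w)) hne
      set N : Finset V := A.filter fun w => G.Adj v w with hN
      set M : Finset V := A \ N with hM
      have hNA : N ⊆ A := Finset.filter_subset _ _
      -- clique-freeness of N at level r+1
      have hclN : ∀ S : Finset V, S ⊆ N → ¬ G.IsNClique (r + 1) S := by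
        intro S hS hScl
        have hvS : v ∉ S := by
          intro hv
          exact G.irrefl (Finset.mem_filter.1 (hS hv)).2
        have hins : G.IsNClique (r + 2) (insert v S) := by
          refine hScl.insert ?_
          intro b hb
          exact (Finset.mem_filter.1 (hS hb)).2
        refine hcl (insert v S) ?_ hins
        intro z hz
        rcases Finset.mem_insert.1 hz with rfl | hz'
        · exact hvA
        · exact hNA (hS hz')
      obtain ⟨f₀, hf₀lt, hf₀bd⟩ := ih N hclN
      refine ⟨fun u => if u ∈ N then f₀ u + 1 else 0, ?_, ?_⟩
      · intro u
        by_cases h : u ∈ N <;> simp [h]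
        · exact hf₀lt u
      -- counting
      set f : V → ℕ := fun u => if u ∈ N then f₀ u + 1 else 0 with hf
      have hMN : ∀ x, x ∈ M → x ∉ N := fun x hx => (Finset.mem_sdiff.1 hx).2
      have hMA : M ⊆ A := Finset.sdiff_subset
      have hAiff : ∀ x, x ∈ A ↔ x ∈ N ∨ x ∈ M := by
        intro x
        constructor
        · intro hx
          by_cases h : x ∈ N
          · exact Or.inl h
          · exact Or.inr (Finset.mem_sdiff.2 ⟨hx, h⟩)
        · rintro (h | h)
          · exact hNA h
          · exact hMA h
      -- (K1) splitting the monochromatic pairs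
      have hunion : (paF G A).filter (fun p => f p.1 = f p.2)
          = ((paF G N).filter fun p => f₀ p.1 = f₀ p.2) ∪ paF G M := by
        ext ⟨x, y⟩
        simp only [Finset.mem_filter, mem_paF, Finset.mem_union]
        constructor
        · rintro ⟨⟨hadj, hxA, hyA⟩, hfe⟩
          by_cases hx : x ∈ N <;> by_cases hy : y ∈ N <;>
            simp only [hf, hx, hy, if_pos, if_neg, if_true, if_false] at hfe
          · exact Or.inl ⟨⟨hadj, hx, hy⟩, by omega⟩
          · simp [hx, hy] at hfe
          · simp [hx, hy] at hfe
          · exact Or.inr ⟨hadj, Finset.mem_sdiff.2 ⟨hxA, hx⟩, Finset.mem_sdiff.2 ⟨hyA, hy⟩⟩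
        · rintro (⟨⟨hadj, hx, hy⟩, he⟩ | ⟨hadj, hx, hy⟩)
          · exact ⟨⟨hadj, hNA hx, hNA hy⟩, by simp [hf, hx, hy, he]⟩
          · refine ⟨⟨hadj, hMA hx, hMA hy⟩, ?_⟩
            simp [hf, hMN x hx, hMN y hy]
      have hdisj1 : Disjoint ((paF G N).filter fun p => f₀ p.1 = f₀ p.2) (paF G M) := by
        rw [Finset.disjoint_left]
        intro p hp hq
        exact hMN p.1 (mem_paF.1 hq).2.1 ((mem_paF.1 (Finset.mem_filter.1 hp).1).2.1)
      have hK1 : #((paF G A).filter fun p => f p.1 = f p.2)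
          = #((paF G N).filter fun p => f₀ p.1 = f₀ p.2) + #(paF G M) := by
        rw [hunion, Finset.card_union_of_disjoint hdisj1]
      -- (K2) splitting all pairs in A by membership pattern
      set pNM : Finset (V × V) :=
        Finset.univ.filter (fun p => G.Adj p.1 p.2 ∧ p.1 ∈ N ∧ p.2 ∈ M) with hpNM
      set pMN : Finset (V × V) :=
        Finset.univ.filter (fun p => G.Adj p.1 p.2 ∧ p.1 ∈ M ∧ p.2 ∈ N) with hpMN
      have hsplit : paF G A = (paF G N ∪ pNM) ∪ (pMN ∪ paF G M) := by
        ext ⟨x, y⟩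
        simp only [mem_paF, Finset.mem_union, hpNM, hpMN, Finset.mem_filter,
          Finset.mem_univ, true_and]
        constructor
        · rintro ⟨hadj, hx, hy⟩
          rcases (hAiff x).1 hx with h1 | h1 <;> rcases (hAiff y).1 hy with h2 | h2
          · exact Or.inl (Or.inl ⟨hadj, h1, h2⟩)
          · exact Or.inl (Or.inr ⟨hadj, h1, h2⟩)
          · exact Or.inr (Or.inl ⟨hadj, h1, h2⟩)
          · exact Or.inr (Or.inr ⟨hadj, h1, h2⟩)
        · rintro ((⟨h, h1, h2⟩ | ⟨h, h1, h2⟩) | (⟨h, h1, h2⟩ | ⟨h, h1, h2⟩)) <;>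
            exact ⟨h, (hAiff x).2 (by tauto), (hAiff y).2 (by tauto)⟩
      have hd2 : Disjoint (paF G N ∪ pNM) (pMN ∪ paF G M) := by
        rw [Finset.disjoint_left]
        intro p hp hq
        have h1 : p.1 ∈ N := by
          rcases Finset.mem_union.1 hp with h | h
          · exact (mem_paF.1 h).2.1
          · exact (Finset.mem_filter.1 h).2.2.1
        have h2 : p.1 ∈ M := by
          rcases Finset.mem_union.1 hq with h | h
          · exact (Finset.mem_filter.1 h).2.2.1
          · exact (mem_paF.1 h).2.1
        exact hMN p.1 h2 h1
      have hd3 : Disjoint (paF G N) pNM := by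
        rw [Finset.disjoint_left]
        intro p hp hq
        exact hMN p.2 ((Finset.mem_filter.1 hq).2.2.2) (mem_paF.1 hp).2.2
      have hd4 : Disjoint pMN (paF G M) := by
        rw [Finset.disjoint_left]
        intro p hp hq
        exact hMN p.2 (mem_paF.1 hq).2.2 ((Finset.mem_filter.1 hp).2.2.2)
      have hswap : #pNM = #pMN := by
        rw [hpNM, hpMN]
        exact card_pairs_swap G N M
      have hK2 : #(paF G A) = #(paF G N) + #pMN + #pMN + #(paF G M) := by
        rw [hsplit, Finset.card_union_of_disjoint hd2, Finset.card_union_of_disjoint hd3,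
          Finset.card_union_of_disjoint hd4, hswap]
        ring
      -- (K3) degree bound
      have hbsplit : (Finset.univ.filter fun p : V × V => G.Adj p.1 p.2 ∧ p.1 ∈ M ∧ p.2 ∈ A)
          = pMN ∪ paF G M := by
        ext ⟨x, y⟩
        simp only [mem_paF, Finset.mem_union, hpMN, Finset.mem_filter,
          Finset.mem_univ, true_and]
        constructor
        · rintro ⟨hadj, hx, hy⟩
          rcases (hAiff y).1 hy with h2 | h2
          · exact Or.inl ⟨hadj, hx, h2⟩
          · exact Or.inr ⟨hadj, hx, h2⟩
        · rintro (⟨h, h1, h2⟩ | ⟨h, h1, h2⟩) <;>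
            exact ⟨h, h1, (hAiff y).2 (by tauto)⟩
      have hNcard : #N = #(A.filter fun w => G.Adj v w) := rfl
      have hdeg : #pMN + #(paF G M) ≤ #M * #N := by
        rw [← Finset.card_union_of_disjoint hd4, ← hbsplit, card_pairs_left]
        calc ∑ u ∈ M, #(A.filter fun w => G.Adj u w)
            ≤ ∑ _u ∈ M, #N := by
              refine Finset.sum_le_sum fun u hu => ?_
              rw [hNcard]
              exact hmax u (hMA hu)
          _ = #M * #N := by rw [Finset.sum_const, smul_eq_mul]
      -- assemble
      have hMcard : (#M : ℝ) = (#A : ℝ) - (#N : ℝ) := by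
        rw [hM, Finset.card_sdiff_of_subset hNA]
        have := Finset.card_le_card hNA
        push_cast [Nat.cast_sub this]
        ring
      have hNle : (#N : ℝ) ≤ (#A : ℝ) := by
        exact_mod_cast Finset.card_le_card hNA
      have hR1 : (1 : ℝ) ≤ (r : ℝ) := by exact_mod_cast hr
      have hR0 : (0 : ℝ) < (r : ℝ) := by linarith
      have hR10 : (0 : ℝ) < (r : ℝ) + 1 := by linarith
      set a : ℝ := (#A : ℝ)
      set d : ℝ := (#N : ℝ)
      set R : ℝ := (r : ℝ)
      have key : (1 - 1 / R) * d ^ 2 + 2 * ((a - d) * d) ≤ (1 - 1 / (R + 1)) * a ^ 2 := by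
        rw [show (1 - 1 / R) = (R - 1) / R by field_simp,
          show (1 - 1 / (R + 1)) = R / (R + 1) by field_simp; ring]
        rw [div_mul_eq_mul_div, div_mul_eq_mul_div, div_add' _ _ _ (ne_of_gt hR0),
          div_le_div_iff₀ hR0 hR10]
        nlinarith [sq_nonneg (R * a - (R + 1) * d)]
      have hdegR : (#pMN : ℝ) + (#(paF G M) : ℝ) ≤ (a - d) * d := by
        have : ((#pMN + #(paF G M) : ℕ) : ℝ) ≤ ((#M * #N : ℕ) : ℝ) := by
          exact_mod_cast hdeg
        push_cast at this
        rw [hMcard] at this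
        linarith [this]
      have hK1R : (#((paF G A).filter fun p => f p.1 = f p.2) : ℝ)
          = (#((paF G N).filter fun p => f₀ p.1 = f₀ p.2) : ℝ) + (#(paF G M) : ℝ) := by
        exact_mod_cast hK1
      have hK2R : (#(paF G A) : ℝ)
          = (#(paF G N) : ℝ) + (#pMN : ℝ) + (#pMN : ℝ) + (#(paF G M) : ℝ) := by
        exact_mod_cast hK2
      push_cast
      rw [hK1R, hK2R]
      push_cast at hf₀bd
      linarith [hf₀bd, key, hdegR]

lemma pairing (G : SimpleGraph V) [DecidableRel G.Adj] (f : V → ℕ) (hf : ∀ v, f v < 4) :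
    ∃ h : V → ℕ, (∀ v, h v < 2) ∧
      3 * #((paF G Finset.univ).filter fun p => h p.1 = h p.2)
        ≤ #(paF G Finset.univ) + 2 * #((paF G Finset.univ).filter fun p => f p.1 = f p.2) := by
  classical
  set pa := paF G (Finset.univ : Finset V) with hpa
  set g1 : ℕ → ℕ := fun c => c / 2 with hg1
  set g2 : ℕ → ℕ := fun c => c % 2 with hg2
  set g3 : ℕ → ℕ := fun c => if c = 0 ∨ c = 3 then 0 else 1 with hg3
  set m1 := #(pa.filter fun p => g1 (f p.1) = g1 (f p.2)) with hm1
  set m2 := #(pa.filter fun p => g2 (f p.1) = g2 (f p.2)) with hm2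
  set m3 := #(pa.filter fun p => g3 (f p.1) = g3 (f p.2)) with hm3
  have key : ∀ c d : ℕ, c < 4 → d < 4 →
      ((if g1 c = g1 d then 1 else 0) + (if g2 c = g2 d then 1 else 0)
        + (if g3 c = g3 d then 1 else 0) : ℕ) = 1 + 2 * (if c = d then 1 else 0) := by
    intro c d hc hd
    interval_cases c <;> interval_cases d <;> simp [hg1, hg2, hg3]
  have hsum : m1 + m2 + m3
      = #pa + 2 * #(pa.filter fun p => f p.1 = f p.2) := by
    rw [hm1, hm2, hm3, Finset.card_filter, Finset.card_filter, Finset.card_filter,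
      Finset.card_filter, Finset.card_eq_sum_ones pa, Finset.mul_sum,
      ← Finset.sum_add_distrib, ← Finset.sum_add_distrib, ← Finset.sum_add_distrib]
    exact Finset.sum_congr rfl fun p _ => key (f p.1) (f p.2) (hf _) (hf _)
  have hcases : 3 * m1 ≤ m1 + m2 + m3 ∨ 3 * m2 ≤ m1 + m2 + m3 ∨ 3 * m3 ≤ m1 + m2 + m3 := by
    omega
  rcases hcases with hc | hc | hc
  · exact ⟨fun v => g1 (f v), fun v => by have := hf v; simp only [hg1]; omega,
      by rw [← hsum]; exact hc⟩
  · exact ⟨fun v => g2 (f v), fun v => by have := hf v; simp only [hg2]; omega,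
      by rw [← hsum]; exact hc⟩
  · refine ⟨fun v => g3 (f v), fun v => ?_, by rw [← hsum]; exact hc⟩
    simp only [hg3]
    split <;> omega

def monoGraph (G : SimpleGraph V) (h : V → ℕ) : SimpleGraph V where
  Adj a b := G.Adj a b ∧ h a = h b
  symm := ⟨fun a b hab => ⟨hab.1.symm, hab.2.symm⟩⟩
  loopless := ⟨fun a ha => G.loopless.irrefl a ha.1⟩

instance (G : SimpleGraph V) [DecidableRel G.Adj] (h : V → ℕ) :
    DecidableRel (monoGraph G h).Adj := fun _ _ => instDecidableAnd

@[simp] lemma monoGraph_adj (G : SimpleGraph V) (h : V → ℕ) (a b : V) :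
    (monoGraph G h).Adj a b ↔ G.Adj a b ∧ h a = h b := Iff.rfl

/-- For every `K₅`-free graph `G` on `n` vertices with `e` edges, `τ_B(G) ≤ n²/4 - e/3`. -/
theorem tauB_le_of_cliqueFree_five (G : SimpleGraph V) [DecidableRel G.Adj]
    (h5 : G.CliqueFree 5) :
    (tauB G : ℝ) ≤ (Fintype.card V : ℝ) ^ 2 / 4 - (G.edgeFinset.card : ℝ) / 3 := by
  classical
  obtain ⟨f, hf4, hfbd⟩ := lemmaA G 4 (by norm_num) Finset.univ (fun S _ => h5 S)
  obtain ⟨h, hh2, hhle⟩ := pairing G f hf4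
  set G' := monoGraph G h with hG'
  have hle : G' ≤ G := fun _ _ hab => hab.1
  have hDsub : (G'.edgeFinset : Set (Sym2 V)) ⊆ G.edgeSet := by
    rw [coe_edgeFinset]
    exact edgeSet_mono hle
  have hcol : (G.deleteEdges (G'.edgeFinset : Set (Sym2 V))).Colorable 2 := by
    refine ⟨Coloring.mk (fun v => (⟨h v, hh2 v⟩ : Fin 2)) ?_⟩
    intro a b hab hc
    rw [deleteEdges_adj] at hab
    have hhab : h a = h b := congrArg Fin.val hc
    apply hab.2
    rw [coe_edgeFinset, mem_edgeSet]
    exact ⟨hab.1, hhab⟩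
  have htau : tauB G ≤ #G'.edgeFinset :=
    Nat.sInf_le ⟨G'.edgeFinset, hDsub, hcol, rfl⟩
  have h2D : 2 * #G'.edgeFinset = #((paF G Finset.univ).filter fun p => h p.1 = h p.2) := by
    rw [two_mul_card_edgeFinset]
    congr 1
    ext ⟨x, y⟩
    simp [paF, hG', monoGraph_adj]
  have h2e : 2 * #G.edgeFinset = #(paF G Finset.univ) := by
    rw [two_mul_card_edgeFinset]
    congr 1
    ext ⟨x, y⟩
    simp [paF]
  rw [Finset.card_univ] at hfbd
  -- real casts
  have hhleR : 3 * (#((paF G Finset.univ).filter fun p => h p.1 = h p.2) : ℝ)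
      ≤ (#(paF G Finset.univ) : ℝ)
        + 2 * (#((paF G Finset.univ).filter fun p => f p.1 = f p.2) : ℝ) := by
    exact_mod_cast hhle
  have h2DR : 2 * (#G'.edgeFinset : ℝ)
      = (#((paF G Finset.univ).filter fun p => h p.1 = h p.2) : ℝ) := by
    exact_mod_cast h2D
  have h2eR : 2 * (#G.edgeFinset : ℝ) = (#(paF G Finset.univ) : ℝ) := by
    exact_mod_cast h2e
  have htauR : (tauB G : ℝ) ≤ (#G'.edgeFinset : ℝ) := by exact_mod_cast htau
  have hc4 : ((4 : ℕ) : ℝ) = 4 := by norm_num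
  rw [hc4] at hfbd
  linarith [hfbd, hhleR, h2DR, h2eR, htauR]
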